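/- arXiv:1712.01226 — 2 statements merged into one kernel-verified Lean document; each statement's English description precedes it below -/
import Mathlib

section
/- For every r ≥ 0, the following moment identities of the kernel hold: ∫₀^∞ K(R,r) dR = 1, ∫₀^∞ R²·K(R,r) dR = r² + 2, ∫₀^∞ R⁴·K(R,r) dR = r⁴ + 8r² + 8, and ∫₀^∞ R⁶·K(R,r) dR = r⁶ + 18r⁴ + 72r² + 48. -/
open MeasureTheory Real Set

/-- Modified Bessel function of the first kind of order zero. -/
noncomputable def I0 (x : ℝ) : ℝ :=
  (1 / π) * ∫ θ in (0:ℝ)..π, Real.exp (x * Real.cos θ)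

/-- The kernel `K(R,r) = R e^{-(R²+r²)/2} I₀(rR)`. -/
noncomputable def Ker (R r : ℝ) : ℝ :=
  R * Real.exp (-(R ^ 2 + r ^ 2) / 2) * I0 (r * R)

/-- Output density induced by an input (amplitude) distribution `μ`. -/
noncomputable def fout (μ : Measure ℝ) (R : ℝ) : ℝ := ∫ r, Ker R r ∂μ

/-- Output entropy `H(μ) = -∫₀^∞ f_μ(R) ln (f_μ(R)/R) dR`. -/
noncomputable def Hout (μ : Measure ℝ) : ℝ :=
  -∫ R in Ioi (0:ℝ), fout μ R * Real.log (fout μ R / R)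



lemma negone_lt (n : ℕ) : (-1:ℝ) < n := by
  have : (0:ℝ) ≤ n := Nat.cast_nonneg n
  linarith

lemma integrable_pow_gauss (n : ℕ) : Integrable (fun x : ℝ => x ^ n * Real.exp (-x ^ 2 / 2)) := by
  have h := integrable_rpow_mul_exp_neg_mul_sq (b := (1:ℝ)/2) (by norm_num) (s := (n:ℝ))
    (negone_lt n)
  simp only [Real.rpow_natCast] at h
  convert h using 2 with x
  ring_nf

lemma gauss_moment_Ioi (q : ℕ) :
    ∫ x in Ioi (0:ℝ), x ^ q * Real.exp (-x ^ 2 / 2)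
      = (2:ℝ) ^ ((q + 1 : ℝ)/2) * (1/2) * Real.Gamma ((q + 1)/2) := by
  have h := integral_rpow_mul_exp_neg_mul_rpow (p := 2) (q := (q:ℝ)) (b := (1:ℝ)/2)
    (by norm_num) (negone_lt q) (by norm_num)
  rw [show ((1:ℝ)/2) ^ (-((q:ℝ) + 1) / 2) = (2:ℝ) ^ (((q:ℝ) + 1) / 2) by
    rw [one_div, ← Real.rpow_neg_one, ← Real.rpow_mul (by norm_num)]
    ring_nf] at h
  rw [← h]
  refine setIntegral_congr_fun measurableSet_Ioi fun x hx => ?_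
  rw [Real.rpow_natCast, show (2:ℝ) = ((2:ℕ):ℝ) by norm_num, Real.rpow_natCast]
  ring_nf

lemma gauss_moment_even (m : ℕ) :
    ∫ x : ℝ, x ^ (2*m) * Real.exp (-x ^ 2 / 2)
      = 2 ^ m * Real.sqrt 2 * Real.Gamma (m + 1/2) := by
  have h : ∫ x : ℝ, x ^ (2*m) * Real.exp (-x ^ 2 / 2)
      = 2 * ∫ x in Ioi (0:ℝ), x ^ (2*m) * Real.exp (-x ^ 2 / 2) := by
    rw [← integral_comp_abs (f := fun t => t ^ (2*m) * Real.exp (-t ^ 2 / 2))]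
    congr 1 with x
    rw [pow_mul, pow_mul, sq_abs]
  rw [h, gauss_moment_Ioi]
  have e1 : ((2*m : ℕ) + 1 : ℝ)/2 = (m : ℝ) + 1/2 := by push_cast; ring
  rw [e1, show ((2:ℝ)) ^ ((m : ℝ) + 1/2) = 2^m * Real.sqrt 2 by
    rw [Real.rpow_add (by norm_num), Real.rpow_natCast, Real.sqrt_eq_rpow]]
  ring

lemma gauss_moment_odd (m : ℕ) :
    ∫ x : ℝ, x ^ (2*m+1) * Real.exp (-x ^ 2 / 2) = 0 := by
  have h := MeasureTheory.integral_neg_eq_self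
    (fun x : ℝ => x ^ (2*m+1) * Real.exp (-x ^ 2 / 2)) (volume : Measure ℝ)
  have h2 : ∀ x : ℝ, (-x) ^ (2*m+1) * Real.exp (-(-x) ^ 2 / 2)
      = -(x ^ (2*m+1) * Real.exp (-x ^ 2 / 2)) := by
    intro x
    rw [Odd.neg_pow ⟨m, by ring⟩, neg_sq]
    ring
  simp only [h2, integral_neg] at h
  linarith

lemma gm0 : ∫ x : ℝ, x ^ 0 * Real.exp (-x ^ 2 / 2) = Real.sqrt 2 * Real.sqrt π := by
  have := gauss_moment_even 0
  norm_num at this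
  rw [Real.Gamma_one_half_eq] at this
  simpa using this

lemma gm2 : ∫ x : ℝ, x ^ 2 * Real.exp (-x ^ 2 / 2) = Real.sqrt 2 * Real.sqrt π := by
  have := gauss_moment_even 1
  norm_num at this
  rw [show (3:ℝ)/2 = 1/2 + 1 by norm_num, Real.Gamma_add_one (by norm_num), Real.Gamma_one_half_eq] at this
  rw [this]; ring

lemma gm4 : ∫ x : ℝ, x ^ 4 * Real.exp (-x ^ 2 / 2) = 3 * (Real.sqrt 2 * Real.sqrt π) := by
  have := gauss_moment_even 2
  norm_num at this
  rw [show (5:ℝ)/2 = 3/2 + 1 by norm_num,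
    Real.Gamma_add_one (by norm_num), show (3:ℝ)/2 = 1/2 + 1 by norm_num,
    Real.Gamma_add_one (by norm_num), Real.Gamma_one_half_eq] at this
  rw [this]; ring

lemma gm6 : ∫ x : ℝ, x ^ 6 * Real.exp (-x ^ 2 / 2) = 15 * (Real.sqrt 2 * Real.sqrt π) := by
  have := gauss_moment_even 3
  norm_num at this
  rw [show (7:ℝ)/2 = 5/2 + 1 by norm_num,
    Real.Gamma_add_one (by norm_num), show (5:ℝ)/2 = 3/2 + 1 by norm_num,
    Real.Gamma_add_one (by norm_num), show (3:ℝ)/2 = 1/2 + 1 by norm_num,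
    Real.Gamma_add_one (by norm_num), Real.Gamma_one_half_eq] at this
  rw [this]; ring

lemma gm1 : ∫ x : ℝ, x ^ 1 * Real.exp (-x ^ 2 / 2) = 0 := gauss_moment_odd 0
lemma gm3 : ∫ x : ℝ, x ^ 3 * Real.exp (-x ^ 2 / 2) = 0 := gauss_moment_odd 1
lemma gm5 : ∫ x : ℝ, x ^ 5 * Real.exp (-x ^ 2 / 2) = 0 := gauss_moment_odd 2

lemma integrable_shift_pow_gauss (n : ℕ) (c : ℝ) :
    Integrable (fun u : ℝ => (u + c) ^ n * Real.exp (-u ^ 2 / 2)) := by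
  have : (fun u : ℝ => (u + c) ^ n * Real.exp (-u ^ 2 / 2))
      = fun u : ℝ => ∑ k ∈ Finset.range (n+1),
        (c ^ (n - k) * (n.choose k : ℝ)) * (u ^ k * Real.exp (-u ^ 2 / 2)) := by
    funext u
    rw [add_pow, Finset.sum_mul]
    exact Finset.sum_congr rfl fun k _ => by ring
  rw [this]
  exact integrable_finset_sum _ fun k _ => (integrable_pow_gauss k).const_mul _

lemma integrable_pow_shift (n : ℕ) (c : ℝ) :
    Integrable (fun x : ℝ => x ^ n * Real.exp (-(x - c) ^ 2 / 2)) := by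
  have := (integrable_shift_pow_gauss n c).comp_sub_right c
  simpa [sub_add_cancel] using this

lemma shift_moment (n : ℕ) (r : ℝ) :
    ∫ x : ℝ, x ^ n * Real.exp (-(x - r) ^ 2 / 2)
      = ∑ k ∈ Finset.range (n+1), (r ^ (n - k) * (n.choose k : ℝ))
          * ∫ u : ℝ, u ^ k * Real.exp (-u ^ 2 / 2) := by
  rw [← MeasureTheory.integral_add_right_eq_self
    (fun x : ℝ => x ^ n * Real.exp (-(x - r) ^ 2 / 2)) r]
  simp only [add_sub_cancel_right]
  have h : ∀ u : ℝ, (u + r) ^ n * Real.exp (-u ^ 2 / 2)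
      = ∑ k ∈ Finset.range (n+1),
          (r ^ (n - k) * (n.choose k : ℝ)) * (u ^ k * Real.exp (-u ^ 2 / 2)) := by
    intro u; rw [add_pow, Finset.sum_mul]
    exact Finset.sum_congr rfl fun k _ => by ring
  simp_rw [h]
  rw [integral_finset_sum _ fun k _ => (integrable_pow_gauss k).const_mul _]
  simp_rw [integral_const_mul]

lemma S0 (r : ℝ) : ∫ x : ℝ, x ^ 0 * Real.exp (-(x - r) ^ 2 / 2)
    = Real.sqrt 2 * Real.sqrt π := by
  rw [shift_moment]
  have h0 := gm0
  simp only [pow_zero, one_mul] at h0 ⊢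
  simp [Finset.sum_range_succ, h0]

lemma S2 (r : ℝ) : ∫ x : ℝ, x ^ 2 * Real.exp (-(x - r) ^ 2 / 2)
    = (r^2 + 1) * (Real.sqrt 2 * Real.sqrt π) := by
  rw [shift_moment]
  simp only [Finset.sum_range_succ, Finset.sum_range_zero, gm0, gm1, gm2]
  norm_num [Nat.choose]
  ring

lemma S4 (r : ℝ) : ∫ x : ℝ, x ^ 4 * Real.exp (-(x - r) ^ 2 / 2)
    = (r^4 + 6*r^2 + 3) * (Real.sqrt 2 * Real.sqrt π) := by
  rw [shift_moment]
  simp only [Finset.sum_range_succ, Finset.sum_range_zero, gm0, gm1, gm2, gm3, gm4]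
  norm_num [Nat.choose]
  ring

lemma S6 (r : ℝ) : ∫ x : ℝ, x ^ 6 * Real.exp (-(x - r) ^ 2 / 2)
    = (r^6 + 15*r^4 + 45*r^2 + 15) * (Real.sqrt 2 * Real.sqrt π) := by
  rw [shift_moment]
  simp only [Finset.sum_range_succ, Finset.sum_range_zero, gm0, gm1, gm2, gm3, gm4, gm5, gm6]
  norm_num [Nat.choose]
  ring

lemma prod_term_integrable (m n : ℕ) (r : ℝ) :
    Integrable (fun p : ℝ × ℝ =>
      (p.1 ^ m * Real.exp (-(p.1 - r) ^ 2 / 2)) * (p.2 ^ n * Real.exp (-p.2 ^ 2 / 2))) := by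
  rw [Measure.volume_eq_prod]
  exact (integrable_pow_shift m r).mul_prod (integrable_pow_gauss n)

lemma prod_term_integral (m n : ℕ) (r : ℝ) :
    ∫ p : ℝ × ℝ,
        (p.1 ^ m * Real.exp (-(p.1 - r) ^ 2 / 2)) * (p.2 ^ n * Real.exp (-p.2 ^ 2 / 2))
      = (∫ x : ℝ, x ^ m * Real.exp (-(x - r) ^ 2 / 2))
          * ∫ y : ℝ, y ^ n * Real.exp (-y ^ 2 / 2) := by
  rw [Measure.volume_eq_prod]
  exact integral_prod_mul (L := ℝ) (fun x => x ^ m * Real.exp (-(x - r) ^ 2 / 2))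
    (fun y => y ^ n * Real.exp (-y ^ 2 / 2))

lemma plane0 (r : ℝ) :
    ∫ p : ℝ × ℝ, (p.1 ^ 2 + p.2 ^ 2) ^ 0 * Real.exp (-((p.1 - r) ^ 2 + p.2 ^ 2) / 2)
      = 2 * π := by
  have eq : (fun p : ℝ × ℝ =>
      (p.1 ^ 2 + p.2 ^ 2) ^ 0 * Real.exp (-((p.1 - r) ^ 2 + p.2 ^ 2) / 2))
      = fun p : ℝ × ℝ =>
        (p.1 ^ 0 * Real.exp (-(p.1 - r) ^ 2 / 2)) * (p.2 ^ 0 * Real.exp (-p.2 ^ 2 / 2)) := by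
    funext p
    rw [show -((p.1 - r) ^ 2 + p.2 ^ 2) / 2 = -(p.1 - r) ^ 2 / 2 + -p.2 ^ 2 / 2 by ring,
      Real.exp_add]
    ring
  rw [eq, prod_term_integral, S0, gm0]
  rw [show √2 * √π * (√2 * √π) = (√2 * √2) * (√π * √π) by ring,
    Real.mul_self_sqrt (by norm_num), Real.mul_self_sqrt pi_pos.le]

lemma c2 : (Real.sqrt 2 * Real.sqrt π) * (Real.sqrt 2 * Real.sqrt π) = 2 * π := by
  rw [show √2 * √π * (√2 * √π) = (√2 * √2) * (√π * √π) by ring,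
    Real.mul_self_sqrt (by norm_num), Real.mul_self_sqrt pi_pos.le]

lemma plane1 (r : ℝ) :
    ∫ p : ℝ × ℝ, (p.1 ^ 2 + p.2 ^ 2) ^ 1 * Real.exp (-((p.1 - r) ^ 2 + p.2 ^ 2) / 2)
      = (r ^ 2 + 2) * (2 * π) := by
  have eq : (fun p : ℝ × ℝ =>
      (p.1 ^ 2 + p.2 ^ 2) ^ 1 * Real.exp (-((p.1 - r) ^ 2 + p.2 ^ 2) / 2))
      = fun p : ℝ × ℝ =>
        (p.1 ^ 2 * Real.exp (-(p.1 - r) ^ 2 / 2)) * (p.2 ^ 0 * Real.exp (-p.2 ^ 2 / 2))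
        + (p.1 ^ 0 * Real.exp (-(p.1 - r) ^ 2 / 2)) * (p.2 ^ 2 * Real.exp (-p.2 ^ 2 / 2)) := by
    funext p
    rw [show -((p.1 - r) ^ 2 + p.2 ^ 2) / 2 = -(p.1 - r) ^ 2 / 2 + -p.2 ^ 2 / 2 by ring,
      Real.exp_add]
    ring
  rw [eq, integral_add (prod_term_integrable 2 0 r) (prod_term_integrable 0 2 r),
    prod_term_integral, prod_term_integral, S2, S0, gm0, gm2]
  calc (r ^ 2 + 1) * (√2 * √π) * (√2 * √π) + √2 * √π * (√2 * √π)
      = (r ^ 2 + 2) * ((√2 * √π) * (√2 * √π)) := by ring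
    _ = (r ^ 2 + 2) * (2 * π) := by rw [c2]

lemma plane2 (r : ℝ) :
    ∫ p : ℝ × ℝ, (p.1 ^ 2 + p.2 ^ 2) ^ 2 * Real.exp (-((p.1 - r) ^ 2 + p.2 ^ 2) / 2)
      = (r ^ 4 + 8 * r ^ 2 + 8) * (2 * π) := by
  have eq : (fun p : ℝ × ℝ =>
      (p.1 ^ 2 + p.2 ^ 2) ^ 2 * Real.exp (-((p.1 - r) ^ 2 + p.2 ^ 2) / 2))
      = fun p : ℝ × ℝ =>
        (p.1 ^ 4 * Real.exp (-(p.1 - r) ^ 2 / 2)) * (p.2 ^ 0 * Real.exp (-p.2 ^ 2 / 2))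
        + (2 * ((p.1 ^ 2 * Real.exp (-(p.1 - r) ^ 2 / 2)) * (p.2 ^ 2 * Real.exp (-p.2 ^ 2 / 2)))
        + (p.1 ^ 0 * Real.exp (-(p.1 - r) ^ 2 / 2)) * (p.2 ^ 4 * Real.exp (-p.2 ^ 2 / 2))) := by
    funext p
    rw [show -((p.1 - r) ^ 2 + p.2 ^ 2) / 2 = -(p.1 - r) ^ 2 / 2 + -p.2 ^ 2 / 2 by ring,
      Real.exp_add]
    ring
  have h23 : Integrable (fun p : ℝ × ℝ =>
      2 * ((p.1 ^ 2 * Real.exp (-(p.1 - r) ^ 2 / 2)) * (p.2 ^ 2 * Real.exp (-p.2 ^ 2 / 2)))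
      + (p.1 ^ 0 * Real.exp (-(p.1 - r) ^ 2 / 2)) * (p.2 ^ 4 * Real.exp (-p.2 ^ 2 / 2))) :=
    ((prod_term_integrable 2 2 r).const_mul 2).add (prod_term_integrable 0 4 r)
  rw [eq, integral_add (prod_term_integrable 4 0 r) h23]
  rw [integral_add ((prod_term_integrable 2 2 r).const_mul 2) (prod_term_integrable 0 4 r),
    integral_const_mul, prod_term_integral, prod_term_integral, prod_term_integral,
    S4, S2, S0, gm0, gm2, gm4]
  calc (r ^ 4 + 6 * r ^ 2 + 3) * (√2 * √π) * (√2 * √π)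
        + (2 * ((r ^ 2 + 1) * (√2 * √π) * (√2 * √π)) + √2 * √π * (3 * (√2 * √π)))
      = (r ^ 4 + 8 * r ^ 2 + 8) * ((√2 * √π) * (√2 * √π)) := by ring
    _ = (r ^ 4 + 8 * r ^ 2 + 8) * (2 * π) := by rw [c2]

lemma plane3 (r : ℝ) :
    ∫ p : ℝ × ℝ, (p.1 ^ 2 + p.2 ^ 2) ^ 3 * Real.exp (-((p.1 - r) ^ 2 + p.2 ^ 2) / 2)
      = (r ^ 6 + 18 * r ^ 4 + 72 * r ^ 2 + 48) * (2 * π) := by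
  have eq : (fun p : ℝ × ℝ =>
      (p.1 ^ 2 + p.2 ^ 2) ^ 3 * Real.exp (-((p.1 - r) ^ 2 + p.2 ^ 2) / 2))
      = fun p : ℝ × ℝ =>
        (p.1 ^ 6 * Real.exp (-(p.1 - r) ^ 2 / 2)) * (p.2 ^ 0 * Real.exp (-p.2 ^ 2 / 2))
        + (3 * ((p.1 ^ 4 * Real.exp (-(p.1 - r) ^ 2 / 2)) * (p.2 ^ 2 * Real.exp (-p.2 ^ 2 / 2)))
        + (3 * ((p.1 ^ 2 * Real.exp (-(p.1 - r) ^ 2 / 2)) * (p.2 ^ 4 * Real.exp (-p.2 ^ 2 / 2)))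
        + (p.1 ^ 0 * Real.exp (-(p.1 - r) ^ 2 / 2)) * (p.2 ^ 6 * Real.exp (-p.2 ^ 2 / 2)))) := by
    funext p
    rw [show -((p.1 - r) ^ 2 + p.2 ^ 2) / 2 = -(p.1 - r) ^ 2 / 2 + -p.2 ^ 2 / 2 by ring,
      Real.exp_add]
    ring
  have h34 : Integrable (fun p : ℝ × ℝ =>
      3 * ((p.1 ^ 2 * Real.exp (-(p.1 - r) ^ 2 / 2)) * (p.2 ^ 4 * Real.exp (-p.2 ^ 2 / 2)))
      + (p.1 ^ 0 * Real.exp (-(p.1 - r) ^ 2 / 2)) * (p.2 ^ 6 * Real.exp (-p.2 ^ 2 / 2))) :=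
    ((prod_term_integrable 2 4 r).const_mul 3).add (prod_term_integrable 0 6 r)
  have h234 : Integrable (fun p : ℝ × ℝ =>
      3 * ((p.1 ^ 4 * Real.exp (-(p.1 - r) ^ 2 / 2)) * (p.2 ^ 2 * Real.exp (-p.2 ^ 2 / 2)))
      + (3 * ((p.1 ^ 2 * Real.exp (-(p.1 - r) ^ 2 / 2)) * (p.2 ^ 4 * Real.exp (-p.2 ^ 2 / 2)))
        + (p.1 ^ 0 * Real.exp (-(p.1 - r) ^ 2 / 2)) * (p.2 ^ 6 * Real.exp (-p.2 ^ 2 / 2)))) :=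
    ((prod_term_integrable 4 2 r).const_mul 3).add h34
  rw [eq, integral_add (prod_term_integrable 6 0 r) h234]
  rw [integral_add ((prod_term_integrable 4 2 r).const_mul 3) h34]
  rw [integral_add ((prod_term_integrable 2 4 r).const_mul 3) (prod_term_integrable 0 6 r),
    integral_const_mul, integral_const_mul,
    prod_term_integral, prod_term_integral, prod_term_integral, prod_term_integral,
    S6, S4, S2, S0, gm0, gm2, gm4, gm6]
  calc (r ^ 6 + 15 * r ^ 4 + 45 * r ^ 2 + 15) * (√2 * √π) * (√2 * √π)
        + (3 * ((r ^ 4 + 6 * r ^ 2 + 3) * (√2 * √π) * (√2 * √π))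
        + (3 * ((r ^ 2 + 1) * (√2 * √π) * (3 * (√2 * √π)))
        + √2 * √π * (15 * (√2 * √π))))
      = (r ^ 6 + 18 * r ^ 4 + 72 * r ^ 2 + 48) * ((√2 * √π) * (√2 * √π)) := by ring
    _ = (r ^ 6 + 18 * r ^ 4 + 72 * r ^ 2 + 48) * (2 * π) := by rw [c2]

lemma I0_Ioo (x : ℝ) :
    ∫ θ in Ioo (-π) π, Real.exp (x * Real.cos θ) = 2 * π * I0 x := by
  have hc : Continuous fun θ : ℝ => Real.exp (x * Real.cos θ) := by fun_prop
  have h1 : ∫ θ in Ioo (-π) π, Real.exp (x * Real.cos θ)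
      = ∫ θ in (-π)..π, Real.exp (x * Real.cos θ) := by
    rw [intervalIntegral.integral_of_le (by linarith [pi_pos]), integral_Ioc_eq_integral_Ioo]
  have h2 : ∫ θ in (-π)..(0:ℝ), Real.exp (x * Real.cos θ)
      = ∫ θ in (0:ℝ)..π, Real.exp (x * Real.cos θ) := by
    have := intervalIntegral.integral_comp_neg (a := (0:ℝ)) (b := π)
      (fun θ => Real.exp (x * Real.cos θ))
    simp only [Real.cos_neg, neg_zero] at this
    rw [← this]
  have h3 := intervalIntegral.integral_add_adjacent_intervals (a := -π) (b := (0:ℝ)) (c := π)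
    (μ := volume) (f := fun θ => Real.exp (x * Real.cos θ)) (hc.intervalIntegrable _ _)
    (hc.intervalIntegrable _ _)
  rw [h1, ← h3, h2, I0]
  have hπ : (π:ℝ) ≠ 0 := pi_ne_zero
  field_simp
  ring

set_option maxHeartbeats 1000000 in
lemma key (k : ℕ) (r : ℝ) (hr : 0 ≤ r) :
    (2 * π) * ∫ R in Ioi (0:ℝ), R ^ (2*k) * Ker R r
      = ∫ p : ℝ × ℝ, (p.1 ^ 2 + p.2 ^ 2) ^ k * Real.exp (-((p.1 - r) ^ 2 + p.2 ^ 2) / 2) := by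
  rw [← integral_comp_polarCoord_symm
    (fun p : ℝ × ℝ => (p.1 ^ 2 + p.2 ^ 2) ^ k * Real.exp (-((p.1 - r) ^ 2 + p.2 ^ 2) / 2))]
  have htarget : polarCoord.target = Ioi (0:ℝ) ×ˢ Ioo (-π) π := rfl
  have hsymm : ∀ p : ℝ × ℝ, polarCoord.symm p = (p.1 * Real.cos p.2, p.1 * Real.sin p.2) :=
    fun p => rfl
  set g : ℝ × ℝ → ℝ := fun p =>
    p.1 ^ (2*k+1) * Real.exp (-(p.1 ^ 2 + r ^ 2) / 2) * Real.exp (r * p.1 * Real.cos p.2) with hg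
  have hcongr : ∫ p in polarCoord.target,
      p.1 • ((fun q : ℝ × ℝ => (q.1 ^ 2 + q.2 ^ 2) ^ k
          * Real.exp (-((q.1 - r) ^ 2 + q.2 ^ 2) / 2)) (polarCoord.symm p))
      = ∫ p in Ioi (0:ℝ) ×ˢ Ioo (-π) π, g p := by
    rw [htarget]
    refine setIntegral_congr_fun (measurableSet_Ioi.prod measurableSet_Ioo) fun p hp => ?_
    obtain ⟨hp1, hp2⟩ := hp
    simp only [hsymm]
    have hsq : (p.1 * Real.cos p.2) ^ 2 + (p.1 * Real.sin p.2) ^ 2 = p.1 ^ 2 := by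
      have := Real.sin_sq_add_cos_sq p.2
      nlinarith [this]
    have hexp : -((p.1 * Real.cos p.2 - r) ^ 2 + (p.1 * Real.sin p.2) ^ 2) / 2
        = -(p.1 ^ 2 + r ^ 2) / 2 + r * p.1 * Real.cos p.2 := by
      have := Real.sin_sq_add_cos_sq p.2
      nlinarith [this]
    simp only [smul_eq_mul, hsq, hexp, Real.exp_add, hg]
    rw [pow_add, pow_mul, pow_one]
    ring
  rw [hcongr]
  -- Fubini
  have hbound : Integrable (fun p : ℝ × ℝ =>
      (p.1 ^ (2*k+1) * Real.exp (-(p.1 - r) ^ 2 / 2)) * (1:ℝ))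
      ((volume.restrict (Ioi (0:ℝ))).prod (volume.restrict (Ioo (-π) π))) :=
    ((integrable_pow_shift (2*k+1) r).integrableOn).mul_prod
      (by
        have : IntegrableOn (fun _ : ℝ => (1:ℝ)) (Ioo (-π) π) volume :=
          (integrableOn_const_iff).mpr (Or.inr measure_Ioo_lt_top)
        exact this)
  have hmem : ∀ᵐ p ∂((volume.restrict (Ioi (0:ℝ))).prod (volume.restrict (Ioo (-π) π))),
      p ∈ Ioi (0:ℝ) ×ˢ Ioo (-π) π := by
    rw [Measure.prod_restrict]
    exact ae_restrict_mem (measurableSet_Ioi.prod measurableSet_Ioo)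
  have hint : IntegrableOn g (Ioi (0:ℝ) ×ˢ Ioo (-π) π) := by
    rw [IntegrableOn, Measure.volume_eq_prod, ← Measure.prod_restrict]
    refine Integrable.mono' hbound ?_ ?_
    · exact (Continuous.aestronglyMeasurable (by fun_prop))
    · filter_upwards [hmem] with p hp
      obtain ⟨hp1, _⟩ := hp
      have hp1' : (0:ℝ) < p.1 := hp1
      have hnn : 0 ≤ g p := by positivity
      rw [Real.norm_of_nonneg hnn, hg, mul_one]
      calc p.1 ^ (2*k+1) * Real.exp (-(p.1 ^ 2 + r ^ 2) / 2) * Real.exp (r * p.1 * Real.cos p.2)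
          ≤ p.1 ^ (2*k+1) * Real.exp (-(p.1 ^ 2 + r ^ 2) / 2) * Real.exp (r * p.1) := by
            have : r * p.1 * Real.cos p.2 ≤ r * p.1 := by
              nlinarith [Real.cos_le_one p.2, Real.neg_one_le_cos p.2, hp1'.le, hr,
                mul_nonneg hr hp1'.le]
            exact mul_le_mul_of_nonneg_left (Real.exp_le_exp.mpr this) (by positivity)
        _ = p.1 ^ (2*k+1) * Real.exp (-(p.1 - r) ^ 2 / 2) := by
            rw [mul_assoc, ← Real.exp_add]
            congr 2
            ring
  rw [Measure.volume_eq_prod] at hint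
  rw [Measure.volume_eq_prod, setIntegral_prod _ hint]
  have hin : ∀ R ∈ Ioi (0:ℝ), ∫ θ in Ioo (-π) π, g (R, θ)
      = (2 * π) * (R ^ (2*k) * Ker R r) := by
    intro R hR
    simp only [hg]
    rw [integral_const_mul, I0_Ioo (r * R)]
    rw [Ker, pow_add, pow_one]
    ring
  rw [setIntegral_congr_fun measurableSet_Ioi hin, integral_const_mul]

theorem stmt_16 (r : ℝ) (hr : 0 ≤ r) :
    (∫ R in Ioi (0:ℝ), Ker R r) = 1 ∧
    (∫ R in Ioi (0:ℝ), R ^ 2 * Ker R r) = r ^ 2 + 2 ∧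
    (∫ R in Ioi (0:ℝ), R ^ 4 * Ker R r) = r ^ 4 + 8 * r ^ 2 + 8 ∧
    (∫ R in Ioi (0:ℝ), R ^ 6 * Ker R r) = r ^ 6 + 18 * r ^ 4 + 72 * r ^ 2 + 48 := by
  have h2pi : (2*π:ℝ) ≠ 0 := by positivity
  have k0 := key 0 r hr; rw [plane0] at k0
  have k1 := key 1 r hr; rw [plane1] at k1
  have k2 := key 2 r hr; rw [plane2] at k2
  have k3 := key 3 r hr; rw [plane3] at k3
  refine ⟨?_, ?_, ?_, ?_⟩
  · have := mul_left_cancel₀ h2pi (k0.trans (by ring : (2*π:ℝ) = 2*π*1))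
    simpa using this
  · have := mul_left_cancel₀ h2pi (k1.trans
      (show (r^2+2)*(2*π) = 2*π*(r^2+2) by ring))
    simpa using this
  · have := mul_left_cancel₀ h2pi (k2.trans
      (show (r^4+8*r^2+8)*(2*π) = 2*π*(r^4+8*r^2+8) by ring))
    simpa using this
  · have := mul_left_cancel₀ h2pi (k3.trans
      (show (r^6+18*r^4+72*r^2+48)*(2*π) = 2*π*(r^6+18*r^4+72*r^2+48) by ring))
    simpa using this
end

section
/- For every integer n ≥ 0 and every choice of real coefficients α_0, …, α_n, there exist unique real coefficients c_0, …, c_n such that ∫₀^∞ K(R,r)·(Σ_{i=0}^n c_i·R^{2i}) dR = Σ_{i=0}^n α_i·r^{2i} for all r ≥ 0. -/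
open MeasureTheory Real Set

open Finset
open scoped ENNReal NNReal

lemma I0_continuous : Continuous I0 := by
  unfold I0
  exact continuous_const.mul
    (intervalIntegral.continuous_parametric_intervalIntegral_of_continuous' (by fun_prop) 0 π)

lemma I0_nonneg (x : ℝ) : 0 ≤ I0 x := by
  unfold I0
  have h1 : (0:ℝ) ≤ 1 / π := by positivity
  refine mul_nonneg h1 ?_
  exact intervalIntegral.integral_nonneg pi_pos.le (fun θ _ => (Real.exp_pos _).le)

lemma I0_le_exp (x : ℝ) : I0 x ≤ Real.exp |x| := by
  unfold I0
  have h : (∫ θ in (0:ℝ)..π, Real.exp (x * Real.cos θ)) ≤ ∫ _ in (0:ℝ)..π, Real.exp |x| := by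
    apply intervalIntegral.integral_mono_on pi_pos.le
    · exact (Continuous.intervalIntegrable (by fun_prop) _ _)
    · exact intervalIntegrable_const
    · intro θ _
      apply Real.exp_le_exp.2
      calc x * Real.cos θ ≤ |x * Real.cos θ| := le_abs_self _
        _ = |x| * |Real.cos θ| := abs_mul _ _
        _ ≤ |x| * 1 := by
            exact mul_le_mul_of_nonneg_left (abs_cos_le_one θ) (abs_nonneg x)
        _ = |x| := mul_one _
  rw [intervalIntegral.integral_const] at h
  calc (1/π) * (∫ θ in (0:ℝ)..π, Real.exp (x * Real.cos θ))
      ≤ (1/π) * ((π - 0) • Real.exp |x|) := by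
        exact mul_le_mul_of_nonneg_left h (by positivity)
    _ = Real.exp |x| := by
        rw [sub_zero, smul_eq_mul]
        field_simp

lemma cos_pow_odd (n : ℕ) : (∫ θ in (0:ℝ)..π, Real.cos θ ^ (2*n+1)) = 0 := by
  have h := intervalIntegral.integral_comp_sub_left (a := (0:ℝ)) (b := π)
    (fun x => Real.cos x ^ (2*n+1)) π
  simp only [sub_zero, sub_self] at h
  have h2 : ∀ x : ℝ, Real.cos (π - x) ^ (2*n+1) = -(Real.cos x ^ (2*n+1)) := by
    intro x
    rw [Real.cos_pi_sub]
    rw [Odd.neg_pow ⟨n, by ring⟩]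
  simp only [h2] at h
  rw [intervalIntegral.integral_neg] at h
  linarith

lemma cos_pow_even (n : ℕ) :
    (∫ θ in (0:ℝ)..π, Real.cos θ ^ (2*n)) = π * (2*n).factorial / (4^n * ((n.factorial : ℝ))^2) := by
  induction n with
  | zero => simp
  | succ k ih =>
    have h := integral_cos_pow (a := (0:ℝ)) (b := π) (2*k)
    have e : 2 * (k+1) = 2*k + 2 := by ring
    rw [e, h, Real.sin_pi, Real.sin_zero, ih]
    have hk : ((k.factorial : ℝ)) ≠ 0 := Nat.cast_ne_zero.2 k.factorial_ne_zero
    have h4 : (4:ℝ)^k ≠ 0 := by positivity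
    have hfac : ((2*k+2).factorial : ℝ) = (2*k+2) * ((2*k+1) * (2*k).factorial) := by
      have : (2*k+2).factorial = (2*k+2) * (2*k+1).factorial := Nat.factorial_succ (2*k+1)
      rw [this, Nat.factorial_succ (2*k)]
      push_cast; ring
    have hkfac : (((k+1).factorial : ℝ)) = (k+1) * k.factorial := by
      rw [Nat.factorial_succ]; push_cast; ring
    rw [hfac, hkfac]
    field_simp
    push_cast
    ring

lemma integrableOn_pow_gauss {b : ℝ} (hb : 0 < b) (n : ℕ) :
    IntegrableOn (fun R : ℝ => R^n * Real.exp (-b * R^2)) (Ioi 0) := by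
  have h := integrableOn_rpow_mul_exp_neg_mul_sq hb (s := (n:ℝ))
    (lt_of_lt_of_le (by norm_num) (Nat.cast_nonneg n))
  apply h.congr_fun ?_ measurableSet_Ioi
  intro x _
  simp [Real.rpow_natCast]

lemma integrableOn_pow_gauss' (n : ℕ) :
    IntegrableOn (fun R : ℝ => R^n * Real.exp (-R^2/2)) (Ioi 0) := by
  have h := integrableOn_pow_gauss (b := (1/2:ℝ)) (by norm_num) n
  apply h.congr_fun ?_ measurableSet_Ioi
  intro x _
  ring_nf

lemma deriv_aux (m : ℕ) (x : ℝ) :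
    HasDerivAt (fun R : ℝ => -(R^(2*m) * Real.exp (-R^2/2)))
      (x^(2*m+1) * Real.exp (-x^2/2) - (2*m) * x^(2*m-1) * Real.exp (-x^2/2)) x := by
  have hinner : HasDerivAt (fun R : ℝ => -R^2/2) (-x) x := by
    have h := ((hasDerivAt_pow 2 x).neg).div_const 2
    refine h.congr_deriv ?_
    push_cast
    ring
  have hexp := hinner.exp
  have hpow := hasDerivAt_pow (2*m) x
  have := (hpow.mul hexp).neg
  refine this.congr_deriv ?_
  rcases Nat.eq_zero_or_pos m with hm | hm
  · subst hm; norm_num; ring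
  · have h1 : 2*m - 1 + 1 = 2*m := by omega
    have h2 : x^(2*m+1) = x^(2*m) * x := by ring
    rw [h2, ← h1]
    push_cast [h1]
    ring

lemma tendsto_aux (m : ℕ) :
    Filter.Tendsto (fun R : ℝ => -(R^(2*m) * Real.exp (-R^2/2))) Filter.atTop (nhds 0) := by
  have hcomp : Filter.Tendsto (fun R : ℝ => R^2/2) Filter.atTop Filter.atTop := by
    apply Filter.Tendsto.atTop_div_const (by norm_num)
    exact Filter.tendsto_pow_atTop (two_ne_zero)
  have h := (tendsto_pow_mul_exp_neg_atTop_nhds_zero m).comp hcomp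
  have h2 := (h.const_mul ((2:ℝ)^m)).neg
  norm_num at h2
  convert h2 using 2 with R
  have : R^(2*m) = 2^m * (R^2/2)^m := by
    rw [div_pow, pow_mul]
    field_simp
  rw [this]
  ring_nf

lemma gauss_moment (m : ℕ) :
    (∫ R in Ioi (0:ℝ), R^(2*m+1) * Real.exp (-R^2/2)) = 2^m * m.factorial := by
  induction m with
  | zero =>
    have key := MeasureTheory.integral_Ioi_of_hasDerivAt_of_tendsto
      (f := fun R : ℝ => -(R^(2*0) * Real.exp (-R^2/2))) (a := 0)
      (((deriv_aux 0 0).continuousAt).continuousWithinAt)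
      (fun x _ => deriv_aux 0 x)
      (((integrableOn_pow_gauss' 1).congr_fun (by intro x _; norm_num) measurableSet_Ioi))
      (tendsto_aux 0)
    rw [show (0:ℝ) - (fun R : ℝ => -(R ^ (2 * 0) * Real.exp (-R ^ 2 / 2))) 0 = 1 from by norm_num]
      at key
    rw [show ((2:ℝ)^0 * (Nat.factorial 0 : ℝ)) = 1 from by norm_num]
    rw [← key]
    apply setIntegral_congr_fun measurableSet_Ioi
    intro x _
    norm_num
  | succ k ih =>
    have intg1 := integrableOn_pow_gauss' (2*(k+1)+1)
    have intg2 : IntegrableOn (fun x : ℝ =>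
        (2*((k:ℝ)+1)) * x^(2*(k+1)-1) * Real.exp (-x^2/2)) (Ioi 0) := by
      have h : IntegrableOn ((2*((k:ℝ)+1)) • fun x : ℝ =>
          x^(2*(k+1)-1) * Real.exp (-x^2/2)) (Ioi 0) :=
        (integrableOn_pow_gauss' (2*(k+1)-1)).smul _
      apply h.congr_fun ?_ measurableSet_Ioi
      intro x _; simp; ring
    have intsub : IntegrableOn (fun x : ℝ => x^(2*(k+1)+1) * Real.exp (-x^2/2)
        - (2*((k:ℝ)+1)) * x^(2*(k+1)-1) * Real.exp (-x^2/2)) (Ioi 0) := intg1.sub intg2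
    have key := MeasureTheory.integral_Ioi_of_hasDerivAt_of_tendsto
      (f := fun R : ℝ => -(R^(2*(k+1)) * Real.exp (-R^2/2))) (a := 0)
      (((deriv_aux (k+1) 0).continuousAt).continuousWithinAt)
      (fun x _ => deriv_aux (k+1) x)
      (intsub.congr_fun (by intro x _; push_cast; ring) measurableSet_Ioi)
      (tendsto_aux (k+1))
    rw [show (0:ℝ) - (fun R : ℝ => -(R ^ (2 * (k+1)) * Real.exp (-R ^ 2 / 2))) 0 = 0
      from by norm_num] at key
    have keq : (∫ x in Ioi (0:ℝ), (x^(2*(k+1)+1) * Real.exp (-x^2/2)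
        - (2*((k:ℝ)+1)) * x^(2*(k+1)-1) * Real.exp (-x^2/2))) = 0 := by
      refine Eq.trans ?_ key
      exact setIntegral_congr_fun measurableSet_Ioi (fun x _ => by push_cast; ring)
    rw [MeasureTheory.integral_sub intg1 intg2] at keq
    have h2 : 2*(k+1)-1 = 2*k+1 := by omega
    have const_out : (∫ x in Ioi (0:ℝ), (2*((k:ℝ)+1)) * x^(2*(k+1)-1) * Real.exp (-x^2/2))
        = (2*((k:ℝ)+1)) * ∫ x in Ioi (0:ℝ), x^(2*k+1) * Real.exp (-x^2/2) := by
      rw [← MeasureTheory.integral_const_mul]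
      apply setIntegral_congr_fun measurableSet_Ioi
      intro x _
      rw [h2]; ring
    rw [const_out, ih] at keq
    have : (∫ R in Ioi (0:ℝ), R^(2*(k+1)+1) * Real.exp (-R^2/2))
        = (2*((k:ℝ)+1)) * (2^k * k.factorial) := by linarith
    rw [this, Nat.factorial_succ]
    push_cast
    ring

lemma exp_hasSum (y : ℝ) : HasSum (fun n : ℕ => y^n / n.factorial) (Real.exp y) := by
  rw [Real.exp_eq_exp_ℝ]
  exact NormedSpace.expSeries_div_hasSum_exp y

lemma I0_hasSum (x : ℝ) :
    HasSum (fun k : ℕ => x^(2*k) / (4^k * ((k.factorial:ℝ))^2)) (I0 x) := by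
  have hf : ∀ n : ℕ, AEStronglyMeasurable (fun θ : ℝ => (x * Real.cos θ)^n / n.factorial)
      (volume.restrict (Ioc 0 π)) := fun n => Continuous.aestronglyMeasurable (by fun_prop)
  have hbound : ∀ n : ℕ, (∫⁻ θ in Ioc (0:ℝ) π, ‖(x * Real.cos θ)^n / n.factorial‖₊)
      ≤ ENNReal.ofReal (|x|^n / n.factorial * π) := by
    intro n
    have hle : ∀ θ : ℝ, (‖(x * Real.cos θ)^n / (n.factorial:ℝ)‖₊ : ℝ≥0∞)
        ≤ ENNReal.ofReal (|x|^n / n.factorial) := by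
      intro θ
      rw [← ENNReal.ofReal_coe_nnreal, coe_nnnorm]
      apply ENNReal.ofReal_le_ofReal
      rw [norm_div, norm_pow]
      have h1 : ‖(n.factorial : ℝ)‖ = (n.factorial : ℝ) := by
        rw [Real.norm_eq_abs, abs_of_nonneg (Nat.cast_nonneg _)]
      rw [h1]
      have hpos : (0:ℝ) < n.factorial := Nat.cast_pos.2 n.factorial_pos
      apply (div_le_div_iff_of_pos_right hpos).2
      apply pow_le_pow_left₀ (norm_nonneg _) ?_ n
      calc ‖x * Real.cos θ‖ = ‖x‖ * ‖Real.cos θ‖ := norm_mul _ _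
        _ ≤ ‖x‖ * 1 := mul_le_mul_of_nonneg_left
            (by rw [Real.norm_eq_abs]; exact abs_cos_le_one θ) (norm_nonneg x)
        _ = |x| := by rw [mul_one, Real.norm_eq_abs]
    calc (∫⁻ θ in Ioc (0:ℝ) π, ‖(x * Real.cos θ)^n / (n.factorial:ℝ)‖₊)
        ≤ ∫⁻ _ in Ioc (0:ℝ) π, ENNReal.ofReal (|x|^n / n.factorial) :=
          lintegral_mono (fun θ => hle θ)
      _ = ENNReal.ofReal (|x|^n / n.factorial) * volume (Ioc (0:ℝ) π) := by
          rw [MeasureTheory.lintegral_const, Measure.restrict_apply_univ]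
      _ = ENNReal.ofReal (|x|^n / n.factorial * π) := by
          rw [Real.volume_Ioc, sub_zero, ← ENNReal.ofReal_mul (by positivity)]
  have hsum0 : Summable (fun n : ℕ => |x|^n / n.factorial * π) :=
    (Real.summable_pow_div_factorial |x|).mul_right π
  have hne : (∑' n : ℕ, ∫⁻ θ in Ioc (0:ℝ) π, ‖(x * Real.cos θ)^n / (n.factorial:ℝ)‖₊) ≠ ⊤ := by
    apply ne_of_lt
    calc (∑' n : ℕ, ∫⁻ θ in Ioc (0:ℝ) π, ‖(x * Real.cos θ)^n / (n.factorial:ℝ)‖₊)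
        ≤ ∑' n : ℕ, ENNReal.ofReal (|x|^n / n.factorial * π) := ENNReal.tsum_le_tsum hbound
      _ = ENNReal.ofReal (∑' n : ℕ, |x|^n / n.factorial * π) :=
          (ENNReal.ofReal_tsum_of_nonneg (fun n => by positivity) hsum0).symm
      _ < ⊤ := ENNReal.ofReal_lt_top
  have hswap := MeasureTheory.integral_tsum hf hne
  have hpt : ∀ θ : ℝ, (∑' n : ℕ, (x * Real.cos θ)^n / (n.factorial:ℝ)) = Real.exp (x * Real.cos θ) :=
    fun θ => (exp_hasSum _).tsum_eq
  simp_rw [hpt] at hswap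
  -- hswap : ∫ θ in Ioc 0 π, exp (x cos θ) = ∑' n, ∫ θ in Ioc 0 π, (x cos θ)^n/n!
  set J : ℕ → ℝ := fun n => x^n / n.factorial * (∫ θ in (0:ℝ)..π, Real.cos θ ^ n) with hJ
  have hint_n : ∀ n : ℕ, (∫ θ in Ioc (0:ℝ) π, (x * Real.cos θ)^n / (n.factorial:ℝ)) = J n := by
    intro n
    simp only [hJ]
    rw [intervalIntegral.integral_of_le pi_pos.le, ← MeasureTheory.integral_const_mul]
    apply setIntegral_congr_fun measurableSet_Ioc
    intro θ _
    simp only [mul_pow]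
    ring
  simp_rw [hint_n] at hswap
  have hJsum : Summable J := by
    apply Summable.of_norm_bounded hsum0
    intro n
    have h1 : ‖(n.factorial : ℝ)‖ = (n.factorial : ℝ) := by
      rw [Real.norm_eq_abs, abs_of_nonneg (Nat.cast_nonneg _)]
    have h2 : ‖∫ θ in (0:ℝ)..π, Real.cos θ ^ n‖ ≤ π := by
      calc ‖∫ θ in (0:ℝ)..π, Real.cos θ ^ n‖ ≤ ∫ θ in (0:ℝ)..π, ‖Real.cos θ ^ n‖ := by
            apply intervalIntegral.norm_integral_le_abs_integral_norm.trans
            rw [abs_of_nonneg]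
            exact intervalIntegral.integral_nonneg pi_pos.le (fun θ _ => norm_nonneg _)
      _ ≤ ∫ _ in (0:ℝ)..π, (1:ℝ) := by
          apply intervalIntegral.integral_mono_on pi_pos.le
          · exact Continuous.intervalIntegrable (by fun_prop) _ _
          · exact intervalIntegrable_const
          · intro θ _
            rw [norm_pow, Real.norm_eq_abs]
            exact pow_le_one₀ (abs_nonneg _) (abs_cos_le_one θ)
      _ = π := by simp
    calc ‖J n‖ = |x|^n / n.factorial * ‖∫ θ in (0:ℝ)..π, Real.cos θ ^ n‖ := by
          simp only [hJ]
          rw [norm_mul, norm_div, norm_pow, Real.norm_eq_abs x, h1]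
      _ ≤ |x|^n / n.factorial * π := mul_le_mul_of_nonneg_left h2 (by positivity)
  have hJhasSum : HasSum J (∫ θ in Ioc (0:ℝ) π, Real.exp (x * Real.cos θ)) := by
    rw [hswap]
    exact hJsum.hasSum
  have hinj : Function.Injective (fun k : ℕ => 2 * k) := fun a b h => by
    have h2 : 2*a = 2*b := h
    omega
  have hvanish : ∀ n ∉ Set.range (fun k : ℕ => 2 * k), J n = 0 := by
    intro n hn
    have : ∃ m, n = 2*m + 1 := by
      rcases Nat.even_or_odd n with ⟨m, hm⟩ | ⟨m, hm⟩
      · exact absurd ⟨m, show 2*m = n by omega⟩ hn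
      · exact ⟨m, hm⟩
    obtain ⟨m, rfl⟩ := this
    rw [hJ]
    simp only []
    rw [cos_pow_odd, mul_zero]
  have heven : HasSum (fun k : ℕ => J (2*k)) (∫ θ in Ioc (0:ℝ) π, Real.exp (x * Real.cos θ)) :=
    (Function.Injective.hasSum_iff hinj hvanish).2 hJhasSum
  have hfinal := heven.mul_left (1/π)
  have : I0 x = (1/π) * ∫ θ in Ioc (0:ℝ) π, Real.exp (x * Real.cos θ) := by
    rw [I0, intervalIntegral.integral_of_le pi_pos.le]
  rw [← this] at hfinal
  have heq : (fun k : ℕ => x^(2*k) / (4^k * ((k.factorial:ℝ))^2))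
      = fun k : ℕ => (1/π) * J (2*k) := by
    funext k
    simp only [hJ]
    rw [cos_pow_even k]
    have hπ : π ≠ 0 := pi_ne_zero
    have hf1 : ((2*k).factorial : ℝ) ≠ 0 := Nat.cast_ne_zero.2 (Nat.factorial_ne_zero _)
    have hf2 : ((k.factorial : ℝ)) ≠ 0 := Nat.cast_ne_zero.2 (Nat.factorial_ne_zero _)
    have h4 : (4:ℝ)^k ≠ 0 := by positivity
    field_simp
  rw [heq]
  exact hfinal

lemma choose_le_two_pow' (m k : ℕ) : m.choose k ≤ 2^m := by
  rcases le_or_gt k m with h | h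
  · calc m.choose k ≤ ∑ j ∈ range (m+1), m.choose j :=
        Finset.single_le_sum (f := fun j => m.choose j) (fun j _ => Nat.zero_le _)
          (Finset.mem_range.2 (by omega))
      _ = 2^m := Nat.sum_range_choose m
  · rw [Nat.choose_eq_zero_of_lt h]; exact Nat.zero_le _

lemma fact_ratio (i k : ℕ) :
    ((i+k).factorial : ℝ) / ((k.factorial:ℝ))^2 = ((i+k).choose i) * i.factorial / k.factorial := by
  have h := Nat.choose_mul_factorial_mul_factorial (n := i + k) (k := i) (Nat.le_add_right i k)
  rw [Nat.add_sub_cancel_left] at h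
  have hcast : ((i+k).factorial : ℝ) = ((i+k).choose i : ℝ) * i.factorial * k.factorial := by
    rw [← h]; push_cast; ring
  rw [hcast]
  have hk : ((k.factorial : ℝ)) ≠ 0 := Nat.cast_ne_zero.2 (Nat.factorial_ne_zero _)
  field_simp

lemma summable_aux (i : ℕ) (x : ℝ) (hx : 0 ≤ x) :
    Summable (fun k : ℕ => ((i+k).factorial / ((k.factorial:ℝ))^2) * x^k) := by
  have hs : Summable (fun k : ℕ => (2^i * i.factorial : ℝ) * ((2*x)^k / k.factorial)) :=
    (Real.summable_pow_div_factorial (2*x)).mul_left _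
  apply Summable.of_nonneg_of_le (fun k => by positivity) ?_ hs
  intro k
  rw [fact_ratio]
  have hch : ((i+k).choose i : ℝ) ≤ 2^(i+k) := by
    exact_mod_cast Nat.cast_le.2 (choose_le_two_pow' (i+k) i)
  have hk : (0:ℝ) < k.factorial := Nat.cast_pos.2 k.factorial_pos
  calc ((i+k).choose i : ℝ) * i.factorial / k.factorial * x^k
      ≤ 2^(i+k) * i.factorial / k.factorial * x^k := by
        gcongr
    _ = (2^i * i.factorial) * ((2*x)^k / k.factorial) := by
        rw [pow_add, mul_pow]
        field_simp

lemma vandermonde_hasSum (i : ℕ) (x : ℝ) :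
    HasSum (fun k : ℕ => ((i+k).choose i : ℝ) * x^k / k.factorial)
      ((∑ j ∈ range (i+1), (i.choose j : ℝ) * x^j / j.factorial) * Real.exp x) := by
  set f : ℕ → ℝ := fun j => (i.choose j : ℝ) * x^j / j.factorial with hf
  set g : ℕ → ℝ := fun m => x^m / m.factorial with hg
  have hfz : ∀ j ∉ range (i+1), f j = 0 := by
    intro j hj
    rw [hf]
    simp only []
    rw [Nat.choose_eq_zero_of_lt (by simp only [Finset.mem_range] at hj; omega)]
    simp
  have hfsum : HasSum f (∑ j ∈ range (i+1), f j) :=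
    hasSum_sum_of_ne_finset_zero hfz
  have hfnorm : Summable (fun j => ‖f j‖) := by
    apply summable_of_ne_finset_zero (s := range (i+1))
    intro j hj
    rw [hfz j hj, norm_zero]
  have hgsum : HasSum g (Real.exp x) := exp_hasSum x
  have hgnorm : Summable (fun m => ‖g m‖) := by
    have := Real.summable_pow_div_factorial |x|
    apply Summable.congr this
    intro m
    rw [hg]
    simp only [norm_div, norm_pow, Real.norm_eq_abs]
    congr 1
    rw [abs_of_nonneg (Nat.cast_nonneg _)]
  -- Cauchy product
  have hprod : Summable (fun n : ℕ => ∑ kl ∈ Finset.HasAntidiagonal.antidiagonal n, f kl.1 * g kl.2) :=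
    (summable_norm_sum_mul_antidiagonal_of_summable_norm hfnorm hgnorm).of_norm
  have htsum : (∑' j, f j) * (∑' m, g m)
      = ∑' n : ℕ, ∑ kl ∈ Finset.HasAntidiagonal.antidiagonal n, f kl.1 * g kl.2 :=
    tsum_mul_tsum_eq_tsum_sum_antidiagonal_of_summable_norm hfnorm hgnorm
  have hterm : ∀ n : ℕ, (∑ kl ∈ Finset.HasAntidiagonal.antidiagonal n, f kl.1 * g kl.2)
      = ((i+n).choose i : ℝ) * x^n / n.factorial := by
    intro n
    have hstep : ∀ kl ∈ Finset.HasAntidiagonal.antidiagonal n,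
        f kl.1 * g kl.2 = ((i.choose kl.1 : ℝ) * (n.choose kl.2 : ℝ)) * x^n / n.factorial := by
      intro kl hkl
      have hkl' : kl.1 + kl.2 = n := Finset.HasAntidiagonal.mem_antidiagonal.1 hkl
      have hle : kl.2 ≤ n := by omega
      have hch := Nat.choose_mul_factorial_mul_factorial hle
      have hsub : n - kl.2 = kl.1 := by omega
      rw [hsub] at hch
      have hcast : ((n.choose kl.2 : ℝ)) * kl.2.factorial * kl.1.factorial = n.factorial := by
        exact_mod_cast hch
      have h1 : ((kl.1.factorial : ℝ)) ≠ 0 := Nat.cast_ne_zero.2 (Nat.factorial_ne_zero _)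
      have h2 : ((kl.2.factorial : ℝ)) ≠ 0 := Nat.cast_ne_zero.2 (Nat.factorial_ne_zero _)
      have hn : ((n.factorial : ℝ)) ≠ 0 := Nat.cast_ne_zero.2 (Nat.factorial_ne_zero _)
      rw [hf, hg]
      simp only []
      have hx : x^kl.1 * x^kl.2 = x^n := by rw [← pow_add, hkl']
      field_simp
      rw [mul_comm (↑(i.choose kl.1) * x ^ kl.1) (x ^ kl.2), ← mul_assoc, ← hcast]
      ring_nf
      rw [← hx]
      ring
    rw [Finset.sum_congr rfl hstep]
    rw [← Finset.sum_div, ← Finset.sum_mul]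
    have hvdm := Nat.add_choose_eq i n n
    have hchsymm : (i+n).choose i = (i+n).choose n := Nat.choose_symm_add
    have : (∑ kl ∈ Finset.HasAntidiagonal.antidiagonal n, (i.choose kl.1 : ℝ) * (n.choose kl.2 : ℝ))
        = ((i+n).choose n : ℝ) := by
      rw [hvdm]
      push_cast
      rfl
    rw [this, hchsymm]
  have final := hprod.hasSum
  rw [← htsum] at final
  rw [hfsum.tsum_eq, hgsum.tsum_eq] at final
  exact HasSum.congr_fun final (fun n => (hterm n).symm)

lemma ker_cont (i : ℕ) (r : ℝ) : Continuous (fun R : ℝ => Ker R r * R^(2*i)) := by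
  unfold Ker
  have := I0_continuous
  fun_prop

lemma ker_integrable (i : ℕ) (r : ℝ) :
    IntegrableOn (fun R : ℝ => Ker R r * R^(2*i)) (Ioi 0) := by
  have hg : IntegrableOn (fun R : ℝ =>
      Real.exp (r^2) * (R^(2*i+1) * Real.exp (-(1/4:ℝ) * R^2))) (Ioi 0) :=
    (integrableOn_pow_gauss (by norm_num) (2*i+1)).const_mul _
  apply Integrable.mono' hg ((ker_cont i r).aestronglyMeasurable)
  filter_upwards [ae_restrict_mem measurableSet_Ioi] with R hR
  have hR0 : (0:ℝ) < R := hR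
  have hKnn : 0 ≤ Ker R r * R^(2*i) := by
    unfold Ker
    have := I0_nonneg (r * R)
    positivity
  rw [Real.norm_eq_abs, abs_of_nonneg hKnn]
  unfold Ker
  have hI : I0 (r * R) ≤ Real.exp (|r| * R) := by
    have := I0_le_exp (r * R)
    rwa [abs_mul, abs_of_nonneg hR0.le] at this
  calc R * Real.exp (-(R^2 + r^2)/2) * I0 (r*R) * R^(2*i)
      ≤ R * Real.exp (-(R^2 + r^2)/2) * Real.exp (|r| * R) * R^(2*i) := by
        have h1 : (0:ℝ) ≤ R * Real.exp (-(R^2 + r^2)/2) := by positivity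
        have h2 : (0:ℝ) ≤ R^(2*i) := by positivity
        exact mul_le_mul_of_nonneg_right (mul_le_mul_of_nonneg_left hI h1) h2
    _ ≤ Real.exp (r^2) * (R^(2*i+1) * Real.exp (-(1/4:ℝ) * R^2)) := by
        have hexp : Real.exp (-(R^2 + r^2)/2) * Real.exp (|r| * R)
            ≤ Real.exp (r^2 + -(1/4:ℝ) * R^2) := by
          rw [← Real.exp_add]
          apply Real.exp_le_exp.2
          nlinarith [sq_nonneg (|r| - R/2), sq_abs r, abs_nonneg r]
        calc R * Real.exp (-(R^2 + r^2)/2) * Real.exp (|r| * R) * R^(2*i)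
            = (Real.exp (-(R^2 + r^2)/2) * Real.exp (|r| * R)) * (R * R^(2*i)) := by
              ring
          _ ≤ Real.exp (r^2 + -(1/4:ℝ) * R^2) * (R * R^(2*i)) :=
              mul_le_mul_of_nonneg_right hexp (by positivity)
          _ = Real.exp (r^2) * (R^(2*i+1) * Real.exp (-(1/4:ℝ) * R^2)) := by
              rw [Real.exp_add, pow_succ]
              ring

lemma key_moment (i : ℕ) {r : ℝ} (hr : 0 ≤ r) :
    (∫ R in Ioi (0:ℝ), Ker R r * R^(2*i))
      = ∑ j ∈ range (i+1),
          (2:ℝ)^(i-j) * i.factorial * (i.choose j) / j.factorial * r^(2*j) := by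
  set c : ℕ → ℝ := fun k => r^(2*k) * Real.exp (-r^2/2) / (4^k * ((k.factorial:ℝ))^2) with hc
  set f : ℕ → ℝ → ℝ := fun k R => c k * (R^(2*(i+k)+1) * Real.exp (-R^2/2)) with hfdef
  have hcnn : ∀ k, 0 ≤ c k := fun k => by rw [hc]; positivity
  -- pointwise identity
  have hpt : ∀ R : ℝ, Ker R r * R^(2*i) = ∑' k, f k R := by
    intro R
    have h1 := (I0_hasSum (r * R)).mul_left (R^(2*i+1) * Real.exp (-(R^2+r^2)/2))
    have h2 : ∀ k : ℕ, R^(2*i+1) * Real.exp (-(R^2+r^2)/2) * ((r*R)^(2*k) / (4^k * ((k.factorial:ℝ))^2))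
        = f k R := by
      intro k
      rw [hfdef, hc]
      simp only []
      rw [show -(R^2+r^2)/2 = -R^2/2 + -r^2/2 by ring, Real.exp_add,
        show 2*(i+k)+1 = (2*i+1) + 2*k by ring, pow_add, mul_pow]
      ring
    have h3 : HasSum (fun k => f k R) (R^(2*i+1) * Real.exp (-(R^2+r^2)/2) * I0 (r*R)) :=
      h1.congr_fun (fun k => (h2 k).symm)
    rw [h3.tsum_eq]
    unfold Ker
    rw [pow_succ]
    ring
  -- integrability of each term and its integral value
  have hint : ∀ k : ℕ, (∫ R in Ioi (0:ℝ), f k R)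
      = c k * (2^(i+k) * ((i+k).factorial : ℝ)) := by
    intro k
    rw [hfdef]
    simp only []
    rw [MeasureTheory.integral_const_mul, gauss_moment (i+k)]
  have hintg : ∀ k : ℕ, IntegrableOn (fun R => f k R) (Ioi 0) := by
    intro k
    rw [hfdef]
    exact (integrableOn_pow_gauss' (2*(i+k)+1)).const_mul _
  -- the series of integrals
  set b : ℕ → ℝ := fun k => ((i+k).factorial / ((k.factorial:ℝ))^2) * (r^2/2)^k with hb
  have hval : ∀ k : ℕ, c k * (2^(i+k) * ((i+k).factorial : ℝ))
      = Real.exp (-r^2/2) * 2^i * b k := by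
    intro k
    rw [hc, hb]
    simp only []
    have h4 : (4:ℝ)^k = 2^k * 2^k := by rw [← mul_pow]; norm_num
    have hk : ((k.factorial : ℝ)) ≠ 0 := Nat.cast_ne_zero.2 (Nat.factorial_ne_zero _)
    have h2k : (2:ℝ)^k ≠ 0 := by positivity
    rw [pow_add, h4]
    rw [div_pow, pow_mul]
    field_simp
  -- summability
  have hbsum : Summable b := summable_aux i (r^2/2) (by positivity)
  -- integral_tsum
  have hf : ∀ k : ℕ, AEStronglyMeasurable (fun R => f k R) (volume.restrict (Ioi 0)) := by
    intro k
    rw [hfdef]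
    exact Continuous.aestronglyMeasurable (by fun_prop)
  have hfnn : ∀ k : ℕ, (0 : ℝ → ℝ) ≤ᵐ[volume.restrict (Ioi 0)] fun R => f k R := by
    intro k
    filter_upwards [ae_restrict_mem measurableSet_Ioi] with R hR
    have h0R : (0:ℝ) < R := hR
    rw [hfdef]
    simp only [Pi.zero_apply]
    have := hcnn k
    positivity
  have hne : (∑' k : ℕ, ∫⁻ R in Ioi (0:ℝ), ‖f k R‖₊) ≠ ⊤ := by
    have heq : ∀ k : ℕ, (∫⁻ R in Ioi (0:ℝ), ‖f k R‖₊)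
        = ENNReal.ofReal (Real.exp (-r^2/2) * 2^i * b k) := by
      intro k
      rw [← hval k, ← hint k,
        MeasureTheory.ofReal_integral_eq_lintegral_ofReal (hintg k) (hfnn k)]
      apply MeasureTheory.lintegral_congr_ae
      filter_upwards [hfnn k] with R hR
      rw [← ENNReal.ofReal_coe_nnreal, coe_nnnorm, Real.norm_eq_abs,
        abs_of_nonneg (by simpa using hR)]
    rw [funext heq]
    rw [← ENNReal.ofReal_tsum_of_nonneg
      (fun k => by have := hbsum; positivity) ((hbsum.mul_left _))]
    exact ENNReal.ofReal_ne_top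
  have hswap := MeasureTheory.integral_tsum hf hne
  have hswap' : (∫ R in Ioi (0:ℝ), Ker R r * R^(2*i)) = ∑' k, ∫ R in Ioi (0:ℝ), f k R := by
    rw [← hswap]
    apply setIntegral_congr_fun measurableSet_Ioi
    intro R _
    exact hpt R
  rw [hswap']
  simp_rw [hint, hval]
  -- evaluate the tsum via Vandermonde
  have hvdm := (vandermonde_hasSum i (r^2/2)).mul_left
    (Real.exp (-r^2/2) * 2^i * (i.factorial : ℝ))
  have hcongr : ∀ k : ℕ, Real.exp (-r^2/2) * 2^i * b k
      = Real.exp (-r^2/2) * 2^i * (i.factorial : ℝ)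
        * (((i+k).choose i : ℝ) * (r^2/2)^k / k.factorial) := by
    intro k
    rw [hb]
    simp only []
    rw [fact_ratio i k]
    ring
  have hfinal : HasSum (fun k => Real.exp (-r^2/2) * 2^i * b k)
      (Real.exp (-r^2/2) * 2^i * (i.factorial : ℝ)
        * ((∑ j ∈ range (i+1), (i.choose j : ℝ) * (r^2/2)^j / j.factorial)
            * Real.exp (r^2/2))) :=
    hvdm.congr_fun (fun k => hcongr k)
  rw [hfinal.tsum_eq, Finset.sum_mul, Finset.mul_sum]
  apply Finset.sum_congr rfl
  intro j hj
  have hji : j ≤ i := by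
    simp only [Finset.mem_range] at hj
    omega
  have hexp : Real.exp (-r^2/2) * Real.exp (r^2/2) = 1 := by
    rw [← Real.exp_add, show -r^2/2 + r^2/2 = 0 by ring, Real.exp_zero]
  have hpow : (2:ℝ)^i = 2^(i-j) * 2^j := by
    rw [← pow_add]
    congr 1
    omega
  have hj2 : ((j.factorial : ℝ)) ≠ 0 := Nat.cast_ne_zero.2 (Nat.factorial_ne_zero _)
  have h2j : (2:ℝ)^j ≠ 0 := by positivity
  have hhalf : ((r:ℝ)^2/2)^j = r^(2*j) / 2^j := by
    rw [div_pow, ← pow_mul]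
  rw [hhalf]
  calc Real.exp (-r^2/2) * 2^i * (i.factorial:ℝ)
        * ((i.choose j : ℝ) * (r^(2*j) / 2^j) / j.factorial * Real.exp (r^2/2))
      = (Real.exp (-r^2/2) * Real.exp (r^2/2))
          * ((2:ℝ)^i * (i.factorial:ℝ) * (i.choose j : ℝ) * r^(2*j) / (2^j * j.factorial)) := by
        field_simp
    _ = 2^(i-j) * (i.factorial:ℝ) * (i.choose j : ℝ) / j.factorial * r^(2*j) := by
        rw [hexp, one_mul, hpow]
        field_simp

noncomputable def aco (i j : ℕ) : ℝ :=
  (2:ℝ)^(i-j) * i.factorial * (i.choose j) / j.factorial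

lemma key_moment' (i : ℕ) {r : ℝ} (hr : 0 ≤ r) :
    (∫ R in Ioi (0:ℝ), Ker R r * R^(2*i)) = ∑ j ∈ range (i+1), aco i j * r^(2*j) := by
  rw [key_moment i hr]
  rfl

lemma aco_diag (i : ℕ) : aco i i = 1 := by
  unfold aco
  rw [Nat.sub_self, pow_zero, Nat.choose_self]
  have : ((i.factorial : ℝ)) ≠ 0 := Nat.cast_ne_zero.2 (Nat.factorial_ne_zero _)
  field_simp
  simp

lemma aco_zero {i j : ℕ} (h : i < j) : aco i j = 0 := by
  unfold aco
  rw [Nat.choose_eq_zero_of_lt h]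
  simp

lemma poly_coeff_eq {m : ℕ} (β γ : Fin m → ℝ)
    (h : ∀ r : ℝ, 0 ≤ r →
      (∑ j : Fin m, β j * r^(2*(j:ℕ))) = ∑ j : Fin m, γ j * r^(2*(j:ℕ))) :
    β = γ := by
  set q : Polynomial ℝ := ∑ j : Fin m, Polynomial.monomial (2*(j:ℕ)) (β j - γ j) with hq
  have hqz : q = 0 := by
    apply Polynomial.eq_zero_of_infinite_isRoot
    apply Set.Infinite.mono ?_ (Set.Ioi_infinite (0:ℝ))
    intro r hr
    simp only [Set.mem_setOf_eq, Polynomial.IsRoot]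
    have heval : Polynomial.eval r q = ∑ j : Fin m, (β j - γ j) * r^(2*(j:ℕ)) := by
      rw [hq, Polynomial.eval_finset_sum]
      apply Finset.sum_congr rfl
      intro j _
      rw [Polynomial.eval_monomial]
    rw [heval]
    have h2 := h r (le_of_lt hr)
    have : (∑ j : Fin m, (β j - γ j) * r^(2*(j:ℕ)))
        = (∑ j : Fin m, β j * r^(2*(j:ℕ))) - ∑ j : Fin m, γ j * r^(2*(j:ℕ)) := by
      rw [← Finset.sum_sub_distrib]
      apply Finset.sum_congr rfl
      intro j _
      ring
    rw [this, h2, sub_self]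
  funext j0
  have hcoeff : Polynomial.coeff q (2*(j0:ℕ)) = β j0 - γ j0 := by
    rw [hq, Polynomial.finset_sum_coeff]
    rw [Finset.sum_eq_single j0]
    · rw [Polynomial.coeff_monomial, if_pos rfl]
    · intro j _ hjne
      rw [Polynomial.coeff_monomial, if_neg]
      intro hc
      apply hjne
      have : (j:ℕ) = (j0:ℕ) := by omega
      exact Fin.ext this
    · intro habs
      exact absurd (Finset.mem_univ j0) habs
  rw [hqz, Polynomial.coeff_zero] at hcoeff
  linarith [hcoeff]

theorem stmt_17 (n : ℕ) (α : Fin (n + 1) → ℝ) :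
    ∃! c : Fin (n + 1) → ℝ, ∀ r : ℝ, 0 ≤ r →
      (∫ R in Ioi (0:ℝ), Ker R r * ∑ i : Fin (n + 1), c i * R ^ (2 * (i : ℕ)))
        = ∑ i : Fin (n + 1), α i * r ^ (2 * (i : ℕ)) := by
  set M : Matrix (Fin (n+1)) (Fin (n+1)) ℝ := fun j i => aco (i:ℕ) (j:ℕ) with hM
  have hcomp : ∀ (c : Fin (n+1) → ℝ) (r : ℝ), 0 ≤ r →
      (∫ R in Ioi (0:ℝ), Ker R r * ∑ i : Fin (n + 1), c i * R ^ (2 * (i : ℕ)))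
        = ∑ j : Fin (n+1), (M.mulVec c j) * r^(2*(j:ℕ)) := by
    intro c r hr
    have h1 : (∫ R in Ioi (0:ℝ), Ker R r * ∑ i : Fin (n + 1), c i * R ^ (2 * (i : ℕ)))
        = ∫ R in Ioi (0:ℝ), ∑ i : Fin (n+1), c i * (Ker R r * R ^ (2 * (i : ℕ))) := by
      apply setIntegral_congr_fun measurableSet_Ioi
      intro R _
      simp only [Finset.mul_sum]
      apply Finset.sum_congr rfl
      intro i _
      ring
    rw [h1]
    rw [MeasureTheory.integral_finset_sum (univ : Finset (Fin (n+1)))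
      (f := fun i R => c i * (Ker R r * R ^ (2*(i:ℕ))))
      (fun i _ => ((ker_integrable (i:ℕ) r).const_mul (c i)))]
    have h2 : ∀ i : Fin (n+1), (∫ R in Ioi (0:ℝ), c i * (Ker R r * R ^ (2 * (i : ℕ))))
        = c i * ∑ j ∈ range ((i:ℕ)+1), aco (i:ℕ) j * r^(2*j) := by
      intro i
      rw [MeasureTheory.integral_const_mul, key_moment' (i:ℕ) hr]
    simp_rw [h2]
    have h3 : ∀ i : Fin (n+1), (∑ j ∈ range ((i:ℕ)+1), aco (i:ℕ) j * r^(2*j))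
        = ∑ j ∈ range (n+1), aco (i:ℕ) j * r^(2*j) := by
      intro i
      apply Finset.sum_subset (Finset.range_subset_range.2 (by omega : (i:ℕ)+1 ≤ n+1))
      intro j _ hj
      rw [aco_zero (by simp only [Finset.mem_range] at hj; omega), zero_mul]
    simp_rw [h3]
    have h4 : ∀ i : Fin (n+1), (∑ j ∈ range (n+1), aco (i:ℕ) j * r^(2*j))
        = ∑ j : Fin (n+1), aco (i:ℕ) (j:ℕ) * r^(2*(j:ℕ)) := by
      intro i
      rw [Fin.sum_univ_eq_sum_range (fun j => aco (i:ℕ) j * r^(2*j))]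
    simp_rw [h4]
    simp_rw [Finset.mul_sum]
    rw [Finset.sum_comm]
    apply Finset.sum_congr rfl
    intro j _
    simp only [Matrix.mulVec, dotProduct, hM]
    rw [Finset.sum_mul]
    apply Finset.sum_congr rfl
    intro i _
    ring
  -- equivalence with the linear system
  have hiff : ∀ c : Fin (n+1) → ℝ,
      (∀ r : ℝ, 0 ≤ r →
        (∫ R in Ioi (0:ℝ), Ker R r * ∑ i : Fin (n + 1), c i * R ^ (2 * (i : ℕ)))
          = ∑ i : Fin (n + 1), α i * r ^ (2 * (i : ℕ)))
      ↔ M.mulVec c = α := by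
    intro c
    constructor
    · intro h
      apply poly_coeff_eq (M.mulVec c) α
      intro r hr
      rw [← hcomp c r hr]
      exact h r hr
    · intro h r hr
      rw [hcomp c r hr, h]
  -- triangularity and invertibility
  have htri : M.BlockTriangular id := by
    intro i j hij
    rw [hM]
    exact aco_zero (by exact_mod_cast hij)
  have hdet : M.det = 1 := by
    rw [Matrix.det_of_upperTriangular htri]
    apply Finset.prod_eq_one
    intro i _
    show aco (i:ℕ) (i:ℕ) = 1
    exact aco_diag _
  have hu : IsUnit M.det := by rw [hdet]; exact isUnit_one
  refine ⟨M⁻¹.mulVec α, ?_, ?_⟩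
  · apply (hiff _).2
    rw [Matrix.mulVec_mulVec, Matrix.mul_nonsing_inv _ hu, Matrix.one_mulVec]
  · intro y hy
    have hy' := (hiff y).1 hy
    have h5 := congrArg (fun v => M⁻¹.mulVec v) hy'
    simpa [Matrix.mulVec_mulVec, Matrix.nonsing_inv_mul _ hu, Matrix.one_mulVec] using h5
end
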